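/- For every integer E with E ≡ 2 (mod 4) and E ≥ 6, (E/(E+2))·√2_E < √2, where √2_E is the truncated Catalan product. -/

import Mathlib

open Finset Filter Topology Real

/-- The truncated Catalan product
`√2_E = (2²/(1·3))·(6²/(5·7))···((E-4)²/((E-5)(E-3)))·(E/(E-1))` for `E ≡ 2 (mod 4)`. -/
noncomputable def catalanTrunc (E : ℕ) : ℝ :=
  (∏ k ∈ Finset.range ((E - 2) / 4),
    (4 * (k : ℝ) + 2) ^ 2 / ((4 * k + 1) * (4 * k + 3))) * ((E : ℝ) / (E - 1))

noncomputable def catP (n : ℕ) : ℝ :=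
  ∏ k ∈ Finset.range n, (4 * (k : ℝ) + 2) ^ 2 / ((4 * k + 1) * (4 * k + 3))

lemma catP_pos (n : ℕ) : 0 < catP n := by
  refine Finset.prod_pos fun k _ => ?_
  positivity

lemma catP_key (n : ℕ) :
    catP n ^ 2 * ((2 * (n : ℝ) + 1) * Real.Wallis.W n)
      = Real.Wallis.W (2 * n) * (4 * (n : ℝ) + 1) := by
  induction n with
  | zero => simp [catP, Real.Wallis.W]
  | succ n ih =>
    have h2 : 2 * (n + 1) = 2 * n + 1 + 1 := by ring
    have hPs : catP (n + 1)
        = catP n * ((4 * (n : ℝ) + 2) ^ 2 / ((4 * n + 1) * (4 * n + 3))) := by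
      simpa only [catP] using Finset.prod_range_succ
        (fun k => (4 * (k : ℝ) + 2) ^ 2 / ((4 * k + 1) * (4 * k + 3))) n
    rw [h2, Real.Wallis.W_succ, Real.Wallis.W_succ, Real.Wallis.W_succ, hPs]
    have hW : Real.Wallis.W (2 * n)
        = catP n ^ 2 * ((2 * (n : ℝ) + 1) * Real.Wallis.W n) / (4 * (n : ℝ) + 1) := by
      rw [ih]; field_simp
    rw [hW]
    have h1 : (4 * (n : ℝ) + 1) ≠ 0 := by positivity
    have h3 : (4 * (n : ℝ) + 3) ≠ 0 := by positivity
    have h5 : (2 * (n : ℝ) + 1) ≠ 0 := by positivity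
    have h6 : (2 * (n : ℝ) + 3) ≠ 0 := by positivity
    have h7 : (2 * ((2 * n : ℕ) : ℝ) + 1) ≠ 0 := by positivity
    have h8 : (2 * ((2 * n : ℕ) : ℝ) + 3) ≠ 0 := by positivity
    have h9 : (2 * ((2 * n + 1 : ℕ) : ℝ) + 1) ≠ 0 := by positivity
    have h10 : (2 * ((2 * n + 1 : ℕ) : ℝ) + 3) ≠ 0 := by positivity
    push_cast
    field_simp
    ring

lemma catP_sq_tendsto : Tendsto (fun n => catP n ^ 2) atTop (𝓝 2) := by
  have hW2 : Tendsto (fun n : ℕ => Real.Wallis.W (2 * n)) atTop (𝓝 (π / 2)) := by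
    refine Real.Wallis.tendsto_W_nhds_pi_div_two.comp ?_
    exact StrictMono.tendsto_atTop (fun a b h => by omega)
  have hfrac : Tendsto (fun n : ℕ => (4 * (n : ℝ) + 1) / (2 * (n : ℝ) + 1)) atTop (𝓝 2) := by
    have he : ∀ n : ℕ, (4 * (n : ℝ) + 1) / (2 * (n : ℝ) + 1)
        = 2 - 1 / (2 * (n : ℝ) + 1) := by
      intro n
      have : (2 * (n : ℝ) + 1) ≠ 0 := by positivity
      field_simp
      ring
    simp_rw [he]
    have : Tendsto (fun n : ℕ => 1 / (2 * (n : ℝ) + 1)) atTop (𝓝 0) := by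
      refine tendsto_const_nhds.div_atTop ?_
      exact Tendsto.atTop_add (tendsto_natCast_atTop_atTop.const_mul_atTop two_pos)
        tendsto_const_nhds
    simpa using (tendsto_const_nhds.sub this : Tendsto _ _ (𝓝 ((2 : ℝ) - 0)))
  have heq : ∀ n : ℕ, catP n ^ 2
      = Real.Wallis.W (2 * n) / Real.Wallis.W n * ((4 * (n : ℝ) + 1) / (2 * (n : ℝ) + 1)) := by
    intro n
    have hWn := Real.Wallis.W_pos n
    have h5 : (2 * (n : ℝ) + 1) ≠ 0 := by positivity
    have := catP_key n
    field_simp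
    linarith [catP_key n]
  have hmain : Tendsto (fun n : ℕ =>
      Real.Wallis.W (2 * n) / Real.Wallis.W n * ((4 * (n : ℝ) + 1) / (2 * (n : ℝ) + 1)))
      atTop (𝓝 (π / 2 / (π / 2) * 2)) :=
    (hW2.div Real.Wallis.tendsto_W_nhds_pi_div_two (by positivity)).mul hfrac
  have : (π / 2 / (π / 2) * 2 : ℝ) = 2 := by
    field_simp
  rw [this] at hmain
  exact hmain.congr (fun n => (heq n).symm)

lemma catP_lt_sqrt_two (n : ℕ) : catP n < Real.sqrt 2 := by
  have hmono : Monotone fun n => catP n ^ 2 := by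
    refine monotone_nat_of_le_succ fun n => ?_
    have hPs : catP (n + 1)
        = catP n * ((4 * (n : ℝ) + 2) ^ 2 / ((4 * n + 1) * (4 * n + 3))) := by
      simpa only [catP] using Finset.prod_range_succ
        (fun k => (4 * (k : ℝ) + 2) ^ 2 / ((4 * k + 1) * (4 * k + 3))) n
    have hf : 1 ≤ (4 * (n : ℝ) + 2) ^ 2 / ((4 * n + 1) * (4 * n + 3)) := by
      rw [le_div_iff₀ (by positivity)]
      nlinarith [sq_nonneg ((n : ℝ))]
    have hp := catP_pos n
    rw [hPs, mul_pow]
    have hq2 : 1 ≤ ((4 * (n : ℝ) + 2) ^ 2 / ((4 * n + 1) * (4 * n + 3))) ^ 2 := by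
      nlinarith
    nlinarith [mul_le_mul_of_nonneg_left hq2 (sq_nonneg (catP n))]
  have hle : ∀ m, catP m ^ 2 ≤ 2 := hmono.ge_of_tendsto catP_sq_tendsto
  have hstrict : catP n ^ 2 < catP (n + 1) ^ 2 := by
    have hPs : catP (n + 1)
        = catP n * ((4 * (n : ℝ) + 2) ^ 2 / ((4 * n + 1) * (4 * n + 3))) := by
      simpa only [catP] using Finset.prod_range_succ
        (fun k => (4 * (k : ℝ) + 2) ^ 2 / ((4 * k + 1) * (4 * k + 3))) n
    have hf : 1 < (4 * (n : ℝ) + 2) ^ 2 / ((4 * n + 1) * (4 * n + 3)) := by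
      rw [lt_div_iff₀ (by positivity)]
      nlinarith [sq_nonneg ((n : ℝ))]
    have hp := catP_pos n
    rw [hPs, mul_pow]
    have hq2 : 1 < ((4 * (n : ℝ) + 2) ^ 2 / ((4 * n + 1) * (4 * n + 3))) ^ 2 := by
      nlinarith
    nlinarith [mul_lt_mul_of_pos_left hq2 (pow_pos hp 2)]
  have h2 : catP n ^ 2 < 2 := lt_of_lt_of_le hstrict (hle (n + 1))
  exact (Real.lt_sqrt (catP_pos n).le).mpr h2

theorem catalan_trunc_lower (E : ℕ) (hE : E % 4 = 2) (hE6 : 6 ≤ E) :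
    ((E : ℝ) / (E + 2)) * catalanTrunc E < Real.sqrt 2 := by
  have hx : (6 : ℝ) ≤ (E : ℝ) := by exact_mod_cast hE6
  set x := (E : ℝ) with hxdef
  have hct : catalanTrunc E = catP ((E - 2) / 4) * (x / (x - 1)) := rfl
  set P := catP ((E - 2) / 4) with hP
  have hPpos := catP_pos ((E - 2) / 4)
  have hPlt := catP_lt_sqrt_two ((E - 2) / 4)
  rw [hct]
  have h1 : x - 1 > 0 := by linarith
  have h2 : x + 2 > 0 := by linarith
  have hr : x / (x + 2) * (P * (x / (x - 1))) = P * (x * x / ((x + 2) * (x - 1))) := by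
    field_simp
  rw [hr]
  have hratio : x * x / ((x + 2) * (x - 1)) ≤ 1 := by
    rw [div_le_one (by positivity)]
    nlinarith
  calc P * (x * x / ((x + 2) * (x - 1))) ≤ P * 1 := by
        exact mul_le_mul_of_nonneg_left hratio hPpos.le
    _ = P := mul_one P
    _ < Real.sqrt 2 := hPlt
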